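/- Let θ' be a reflexive and transitive binary relation on {1,...,n} and θ'' a reflexive and transitive binary relation on {1,...,m}. Then for every ring R there is a ring isomorphism M_n(θ', M_m(θ'',R)) ≅ M_{nm}(θ̄, R), where θ̄ is the reflexive and transitive relation on {1,...,nm} given by θ̄ = {(i,j) : (⌈i/m⌉, ⌈j/m⌉) ∈ θ' and (i_{(m)}, j_{(m)}) ∈ θ''}, with i_{(m)} the unique element of {1,...,m} congruent to i mod m. -/
import Mathlib


/-- The structural matrix ring `Mₙ(θ,R)` determined by a reflexive and transitive
relation `θ` on `{1, …, n}`: the subring of `Mₙ(R)` consisting of all matrices `A`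
with `A i j = 0` whenever `(i,j) ∉ θ`. -/
def structuralMatrixRing (R : Type*) [Ring R] {n : ℕ} (θ : Fin n → Fin n → Prop)
    (hrefl : ∀ i, θ i i) (htrans : ∀ i j k, θ i j → θ j k → θ i k) :
    Subring (Matrix (Fin n) (Fin n) R) where
  carrier := {A | ∀ i j, ¬ θ i j → A i j = 0}
  zero_mem' := fun _ _ _ => rfl
  one_mem' := by
    intro i j h
    exact Matrix.one_apply_ne fun e => h (e ▸ hrefl i)
  add_mem' := by
    intro A B hA hB i j h
    simp [Matrix.add_apply, hA i j h, hB i j h]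
  neg_mem' := by
    intro A hA i j h
    simp [Matrix.neg_apply, hA i j h]
  mul_mem' := by
    intro A B hA hB i j h
    rw [Matrix.mul_apply]
    refine Finset.sum_eq_zero fun k _ => ?_
    by_cases hik : θ i k
    · rw [hB k j fun hkj => h (htrans i k j hik hkj), mul_zero]
    · rw [hA i k hik, zero_mul]

/-- The relation `θ̄` on `{1, …, nm}` built from `θ'` on `{1, …, n}` and `θ''` on
`{1, …, m}`: `(i,j) ∈ θ̄` iff `(⌈i/m⌉, ⌈j/m⌉) ∈ θ'` and `(i₍ₘ₎, j₍ₘ₎) ∈ θ''`.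
In the `0`-based indexing of `Fin (n * m)` this reads: `(i / m, j / m) ∈ θ'` and
`(i % m, j % m) ∈ θ''`. -/
def thetaBar {n m : ℕ} (θ' : Fin n → Fin n → Prop) (θ'' : Fin m → Fin m → Prop) :
    Fin (n * m) → Fin (n * m) → Prop := fun i j =>
  θ' ⟨i.val / m, Nat.div_lt_of_lt_mul (by rw [Nat.mul_comm m n]; exact i.isLt)⟩
     ⟨j.val / m, Nat.div_lt_of_lt_mul (by rw [Nat.mul_comm m n]; exact j.isLt)⟩ ∧
  θ'' ⟨i.val % m, Nat.mod_lt _ (by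
        rcases Nat.eq_zero_or_pos m with h | h
        · exact absurd i.isLt (by subst h; simp)
        · exact h)⟩
      ⟨j.val % m, Nat.mod_lt _ (by
        rcases Nat.eq_zero_or_pos m with h | h
        · exact absurd j.isLt (by subst h; simp)
        · exact h)⟩

theorem thetaBar_refl {n m : ℕ} {θ' : Fin n → Fin n → Prop} {θ'' : Fin m → Fin m → Prop}
    (h1 : ∀ i, θ' i i) (h2 : ∀ i, θ'' i i) : ∀ i, thetaBar θ' θ'' i i :=
  fun _ => ⟨h1 _, h2 _⟩

theorem thetaBar_trans {n m : ℕ} {θ' : Fin n → Fin n → Prop} {θ'' : Fin m → Fin m → Prop}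
    (h1 : ∀ i j k, θ' i j → θ' j k → θ' i k)
    (h2 : ∀ i j k, θ'' i j → θ'' j k → θ'' i k) :
    ∀ i j k, thetaBar θ' θ'' i j → thetaBar θ' θ'' j k → thetaBar θ' θ'' i k :=
  fun _ _ _ hij hjk => ⟨h1 _ _ _ hij.1 hjk.1, h2 _ _ _ hij.2 hjk.2⟩

/-- For reflexive transitive relations `θ'` on `{1, …, n}` and `θ''` on `{1, …, m}` and
any ring `R`, there is a ring isomorphism `Mₙ(θ', Mₘ(θ'', R)) ≅ M_{nm}(θ̄, R)`. -/
theorem stmt_13 (R : Type*) [Ring R] {n m : ℕ}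
    (θ' : Fin n → Fin n → Prop)
    (h1r : ∀ i, θ' i i) (h1t : ∀ i j k, θ' i j → θ' j k → θ' i k)
    (θ'' : Fin m → Fin m → Prop)
    (h2r : ∀ i, θ'' i i) (h2t : ∀ i j k, θ'' i j → θ'' j k → θ'' i k) :
    Nonempty
      ((structuralMatrixRing (structuralMatrixRing R θ'' h2r h2t) θ' h1r h1t) ≃+*
        (structuralMatrixRing R (thetaBar θ' θ'') (thetaBar_refl h1r h2r)
          (thetaBar_trans h1t h2t))) := by
  classical
  set S1 := structuralMatrixRing R θ'' h2r h2t with hS1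
  set S2 := structuralMatrixRing (S1 : Subring _) θ' h1r h1t with hS2
  set T := structuralMatrixRing R (thetaBar θ' θ'') (thetaBar_refl h1r h2r)
      (thetaBar_trans h1t h2t) with hT
  let e : Fin n × Fin m ≃ Fin (n * m) := finProdFinEquiv
  have hdiv : ∀ (p : Fin n) (q : Fin m), (e (p, q)).divNat = p ∧ (e (p, q)).modNat = q := by
    intro p q
    have h := e.symm_apply_apply (p, q)
    have h' : ((e (p, q)).divNat, (e (p, q)).modNat) = (p, q) := h
    exact ⟨congrArg Prod.fst h', congrArg Prod.snd h'⟩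
  have hbar : ∀ i j : Fin (n * m), thetaBar θ' θ'' i j ↔
      θ' i.divNat j.divNat ∧ θ'' i.modNat j.modNat := fun i j => Iff.rfl
  -- the ring equivalence on full matrix rings
  let φ : Matrix (Fin n) (Fin n) (Matrix (Fin m) (Fin m) R) ≃+*
      Matrix (Fin (n * m)) (Fin (n * m)) R :=
    (Matrix.compRingEquiv (Fin n) (Fin m) R).trans
      (Matrix.reindexAlgEquiv ℤ R e).toRingEquiv
  let inc : S2 →+* Matrix (Fin n) (Fin n) (Matrix (Fin m) (Fin m) R) :=
    ((Subring.subtype S1).mapMatrix).comp (Subring.subtype S2)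
  let f : S2 →+* Matrix (Fin (n * m)) (Fin (n * m)) R := φ.toRingHom.comp inc
  have hf : ∀ (A : S2) (i j : Fin (n * m)),
      f A i j = (((A : Matrix (Fin n) (Fin n) S1) i.divNat j.divNat :
        Matrix (Fin m) (Fin m) R)) i.modNat j.modNat := fun A i j => rfl
  have hmem : ∀ A : S2, f A ∈ T := by
    intro A i j hnij
    rw [hf]
    by_cases h1 : θ' i.divNat j.divNat
    · by_cases h2 : θ'' i.modNat j.modNat
      · exact absurd ((hbar i j).mpr ⟨h1, h2⟩) hnij
      · exact ((A : Matrix (Fin n) (Fin n) S1) i.divNat j.divNat).2 _ _ h2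
    · have h0 : (A : Matrix (Fin n) (Fin n) S1) i.divNat j.divNat = 0 := A.2 _ _ h1
      rw [h0]
      rfl
  have hin : ∀ (B : T) (p r : Fin n) (q s : Fin m), ¬ θ'' q s →
      (B : Matrix (Fin (n * m)) (Fin (n * m)) R) (e (p, q)) (e (r, s)) = 0 := by
    intro B p r q s h
    refine B.2 _ _ fun hc => h ?_
    have := ((hbar _ _).mp hc).2
    rwa [(hdiv p q).2, (hdiv r s).2] at this
  have hout : ∀ (B : T) (p r : Fin n), ¬ θ' p r → ∀ q s : Fin m,
      (B : Matrix (Fin (n * m)) (Fin (n * m)) R) (e (p, q)) (e (r, s)) = 0 := by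
    intro B p r h q s
    refine B.2 _ _ fun hc => h ?_
    have := ((hbar _ _).mp hc).1
    rwa [(hdiv p q).1, (hdiv r s).1] at this
  let g : T → S2 := fun B =>
    ⟨fun p r => ⟨fun q s => (B : Matrix (Fin (n * m)) (Fin (n * m)) R) (e (p, q)) (e (r, s)),
        fun q s h => hin B p r q s h⟩,
      fun p r h => Subtype.ext (funext fun q => funext fun s => hout B p r h q s)⟩
  refine ⟨{ toFun := fun A => ⟨f A, hmem A⟩, invFun := g,
            left_inv := ?_, right_inv := ?_,
            map_mul' := fun a b => Subtype.ext (f.map_mul a b),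
            map_add' := fun a b => Subtype.ext (f.map_add a b) }⟩
  · intro A
    refine Subtype.ext (funext fun p => funext fun r => Subtype.ext
      (funext fun q => funext fun s => ?_))
    show f A (e (p, q)) (e (r, s)) = _
    rw [hf, (hdiv p q).1, (hdiv p q).2, (hdiv r s).1, (hdiv r s).2]
  · intro B
    refine Subtype.ext (funext fun i => funext fun j => ?_)
    show f (g B) i j = (B : Matrix (Fin (n * m)) (Fin (n * m)) R) i j
    rw [hf]
    show (B : Matrix (Fin (n * m)) (Fin (n * m)) R) (e (i.divNat, i.modNat))
      (e (j.divNat, j.modNat)) = _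
    have hi : e (i.divNat, i.modNat) = i := e.apply_symm_apply i
    have hj : e (j.divNat, j.modNat) = j := e.apply_symm_apply j
    rw [hi, hj]
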